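/- Let n be even and define F: B^n → B^n by f_i(x) = x_{i+n/2} for i < n/2 and f_i(x) = x_{i-n/2} for i ≥ n/2, with the sequential update schedule W = ({0},{1},...,{n-1}). Then the set X = {x ∈ B^n : x_i = 0 for all i ≥ n/2} is a clique of size 2^{n/2} in the graph G_NECC(F,W). -/

import Mathlib

/-- A configuration of a Boolean automata network of size `n`. -/
abbrev Conf (n : ℕ) := Fin n → Bool

/-- `F_I`: update simultaneously exactly the automata in `I`. -/
def updSet {n : ℕ} (F : Conf n → Conf n) (I : Finset (Fin n)) (x : Conf n) : Conf n :=
  fun i => if i ∈ I then F x i else x i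

/-- `W_{<j}`: union of the first `j` blocks of the schedule `W`. -/
def prefUnion {n : ℕ} (W : List (Finset (Fin n))) (j : ℕ) : Finset (Fin n) :=
  (W.take j).foldr (· ∪ ·) ∅

/-- `W` is a block-sequential update schedule: an ordered partition of the automata. -/
def isSchedule {n : ℕ} (W : List (Finset (Fin n))) : Prop :=
  (∀ B ∈ W, B.Nonempty) ∧ W.Pairwise Disjoint ∧ W.foldr (· ∪ ·) ∅ = Finset.univ

/-- Confusable configurations: identical after updating the first `i` blocks, some `i ∈ [0,p]`. -/
def confusable {n : ℕ} (F : Conf n → Conf n) (W : List (Finset (Fin n))) (x x' : Conf n) : Prop :=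
  ∃ i ≤ W.length, updSet F (prefUnion W i) x = updSet F (prefUnion W i) x'

/-- `CC(x,x')`: the set of steps making `x` and `x'` confusable. -/
def CCset {n : ℕ} (F : Conf n → Conf n) (W : List (Finset (Fin n))) (x x' : Conf n) : Set ℕ :=
  {i | i ≤ W.length ∧ updSet F (prefUnion W i) x = updSet F (prefUnion W i) x'}

/-- The `G_NECC` graph: edges between non-equivalent confusable configurations. -/
def gnecc {n : ℕ} (F : Conf n → Conf n) (W : List (Finset (Fin n))) :
    SimpleGraph (Conf n) where
  Adj x x' := F x ≠ F x' ∧ confusable F W x x'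
  symm := by
    constructor
    rintro x x' ⟨hne, i, hi, h⟩
    exact ⟨hne.symm, i, hi, h.symm⟩
  loopless := by constructor; rintro x ⟨hne, _⟩; exact hne rfl

/-- `F^W`: apply the blocks of `W` sequentially. -/
def runSched {n : ℕ} (F : Conf n → Conf n) (W : List (Finset (Fin n))) (x : Conf n) : Conf n :=
  W.foldl (fun y B => updSet F B y) x

/-- `W(i)`: the index of the block of `W` containing `i`. -/
def stepOf {n : ℕ} (W : List (Finset (Fin n))) (i : Fin n) : ℕ :=
  W.findIdx (fun B => decide (i ∈ B))

/-- `W' ∈ E_h(W,V')`: `W'` extends `W`, preserving the update order via `h`. -/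
def extendsSched {n m : ℕ} (W : List (Finset (Fin n))) (W' : List (Finset (Fin m)))
    (h : Fin n → Fin m) : Prop :=
  ∀ i i' : Fin n, (stepOf W i ≤ stepOf W i' ↔ stepOf W' (h i) ≤ stepOf W' (h i'))

/-- `(F',W')` `h`-simulates `(F,[V])`: `φ_h ∘ F'^{W'} = F ∘ φ_h`. -/
def simulates {n m : ℕ} (F' : Conf m → Conf m) (W' : List (Finset (Fin m)))
    (F : Conf n → Conf n) (h : Fin n → Fin m) : Prop :=
  ∀ z : Conf m, (fun i => runSched F' W' z (h i)) = F (fun i => z (h i))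

/-- `κ(F,W)`: minimal number of additional automata needed to simulate `(F,[V])`
with a schedule extending `W` order-preservingly. -/
noncomputable def kappa {n : ℕ} (F : Conf n → Conf n) (W : List (Finset (Fin n))) : ℕ :=
  sInf {k | ∃ h : Fin n → Fin (n + k), Function.Injective h ∧
    ∃ W' : List (Finset (Fin (n + k))), isSchedule W' ∧ extendsSched W W' h ∧
      ∃ F' : Conf (n + k) → Conf (n + k), simulates F' W' F h}

/-- The simple sequential update schedule `({0},{1},…,{n-1})`. -/
def seqSched (n : ℕ) : List (Finset (Fin n)) := (List.finRange n).map (fun i => {i})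

/-- The swap network: automata `i` and `i + n/2` exchange their values. -/
def swapF (n : ℕ) (hn : Even n) : Conf n → Conf n :=
  fun x i =>
    if h : (i : ℕ) < n / 2 then
      x ⟨(i : ℕ) + n / 2, by have h2 := Nat.even_iff.mp hn; omega⟩
    else
      x ⟨(i : ℕ) - n / 2, by have := i.isLt; omega⟩


lemma mem_foldr_union {n : ℕ} (L : List (Finset (Fin n))) (i : Fin n) :
    i ∈ L.foldr (· ∪ ·) ∅ ↔ ∃ B ∈ L, i ∈ B := by
  induction L with
  | nil => simp
  | cons B L ih => simp [ih]

lemma mem_prefUnion_seq {n j : ℕ} (i : Fin n) :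
    i ∈ prefUnion (seqSched n) j ↔ (i : ℕ) < j := by
  rw [prefUnion, mem_foldr_union]
  constructor
  · rintro ⟨B, hB, hiB⟩
    rw [seqSched, ← List.map_take] at hB
    obtain ⟨k, hk, rfl⟩ := List.mem_map.mp hB
    obtain ⟨m, hm, rfl⟩ := List.mem_take_iff_getElem.mp hk
    simp only [Finset.mem_singleton] at hiB
    subst hiB
    simp only [List.getElem_finRange, Fin.cast_mk]
    omega
  · intro h
    refine ⟨{i}, ?_, Finset.mem_singleton_self i⟩
    rw [seqSched, ← List.map_take]
    apply List.mem_map.mpr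
    refine ⟨i, ?_, rfl⟩
    apply List.mem_take_iff_getElem.mpr
    refine ⟨(i : ℕ), ?_, ?_⟩
    · simp [i.isLt]; omega
    · simp

lemma seqSched_length (n : ℕ) : (seqSched n).length = n := by
  simp [seqSched]

theorem stmt3 {n : ℕ} (hn : Even n) :
    (gnecc (swapF n hn) (seqSched n)).IsNClique (2 ^ (n / 2))
      (Finset.univ.filter
        (fun x : Conf n => ∀ i : Fin n, n / 2 ≤ (i : ℕ) → x i = false)) := by
  constructor
  · intro x hx x' hx' hxx'
    simp only [Finset.coe_filter, Set.mem_setOf_eq, Finset.mem_univ, true_and] at hx hx'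
    have h2 := Nat.even_iff.mp hn
    constructor
    · -- F x ≠ F x'
      intro hF
      apply hxx'
      funext i
      by_cases hi : (i : ℕ) < n / 2
      · have := congrFun hF ⟨(i : ℕ) + n / 2, by omega⟩
        simp only [swapF] at this
        rw [dif_neg (by show ¬ ((i : ℕ) + n / 2 < n / 2); omega)] at this
        simpa using this
      · rw [hx i (by omega), hx' i (by omega)]
    · refine ⟨n / 2, by rw [seqSched_length]; omega, ?_⟩
      funext i
      simp only [updSet]
      by_cases hi : i ∈ prefUnion (seqSched n) (n / 2)
      · rw [if_pos hi, if_pos hi]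
        have hi' : (i : ℕ) < n / 2 := (mem_prefUnion_seq i).mp hi
        simp only [swapF, dif_pos hi']
        rw [hx ⟨(i : ℕ) + n / 2, by omega⟩ (by simp),
            hx' ⟨(i : ℕ) + n / 2, by omega⟩ (by simp)]
      · rw [if_neg hi, if_neg hi]
        have hi' : ¬ (i : ℕ) < n / 2 := fun h => hi ((mem_prefUnion_seq i).mpr h)
        rw [hx i (by omega), hx' i (by omega)]
  · -- card
    have h2 := Nat.even_iff.mp hn
    have hc : (2:ℕ) ^ (n / 2) = Fintype.card (Fin (n / 2) → Bool) := by simp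
    rw [hc]
    symm
    rw [← Finset.card_univ]
    apply Finset.card_bij (fun (y : Fin (n / 2) → Bool) _ =>
      (fun i : Fin n => if h : (i : ℕ) < n / 2 then y ⟨(i : ℕ), h⟩ else false))
    · intro y _
      simp only [Finset.mem_filter, Finset.mem_univ, true_and]
      intro i hi
      rw [dif_neg (by omega)]
    · intro y1 _ y2 _ h
      funext j
      have := congrFun h ⟨(j : ℕ), by have := j.isLt; omega⟩
      simpa [dif_pos j.isLt] using this
    · intro x hx
      simp only [Finset.mem_filter, Finset.mem_univ, true_and] at hx
      refine ⟨fun j => x ⟨(j : ℕ), by have := j.isLt; omega⟩, Finset.mem_univ _, ?_⟩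
      funext i
      by_cases hi : (i : ℕ) < n / 2
      · simp [dif_pos hi]
      · rw [dif_neg hi, hx i (by omega)]
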